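/- Let A ∈ B(E,F) be Fredholm (dim N(A) < ∞ and codim R(A) < ∞) with generalized inverse A⁺. If T ∈ B(E,F) satisfies ‖T − A‖ < ‖A⁺‖⁻¹, dim N(T) = dim N(A) and codim R(T) = codim R(A), with R(T) closed and complemented, then R(T) ∩ N(A⁺) = {0}. -/

import Mathlib

open ContinuousLinearMap

variable {E F : Type*} [NormedAddCommGroup E] [NormedSpace ℝ E] [CompleteSpace E]
  [NormedAddCommGroup F] [NormedSpace ℝ F] [CompleteSpace F]

theorem stmt10 (A T : E →L[ℝ] F) (Ap : F →L[ℝ] E)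
    (h1 : A ∘L (Ap ∘L A) = A) (h2 : Ap ∘L (A ∘L Ap) = Ap)
    (hkerA : FiniteDimensional ℝ (LinearMap.ker (A : E →ₗ[ℝ] F)))
    (hcokerA : FiniteDimensional ℝ (F ⧸ LinearMap.range (A : E →ₗ[ℝ] F)))
    (hT : ‖T - A‖ < ‖Ap‖⁻¹)
    (hkerT : FiniteDimensional ℝ (LinearMap.ker (T : E →ₗ[ℝ] F)))
    (hkerEq : Module.finrank ℝ (LinearMap.ker (T : E →ₗ[ℝ] F)) = Module.finrank ℝ (LinearMap.ker (A : E →ₗ[ℝ] F)))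
    (hcokerT : FiniteDimensional ℝ (F ⧸ LinearMap.range (T : E →ₗ[ℝ] F)))
    (hcokerEq : Module.finrank ℝ (F ⧸ LinearMap.range (T : E →ₗ[ℝ] F)) =
      Module.finrank ℝ (F ⧸ LinearMap.range (A : E →ₗ[ℝ] F)))
    (hclosed : IsClosed (LinearMap.range (T : E →ₗ[ℝ] F) : Set F))
    (hcompl : (LinearMap.range (T : E →ₗ[ℝ] F)).ClosedComplemented) :
    LinearMap.range (T : E →ₗ[ℝ] F) ⊓ LinearMap.ker (Ap : F →ₗ[ℝ] E) = ⊥ := by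
  have h1' : ∀ x : E, A (Ap (A x)) = A x := fun x => ContinuousLinearMap.ext_iff.mp h1 x
  have h2' : ∀ y : F, Ap (A (Ap y)) = Ap y := fun y => ContinuousLinearMap.ext_iff.mp h2 y
  have hApnorm : 0 < ‖Ap‖ := by
    rcases (norm_nonneg Ap).lt_or_eq with h | h
    · exact h
    · exfalso
      rw [← h, inv_zero] at hT
      exact absurd hT (not_lt.2 (norm_nonneg _))
  have hnorm : ‖-(Ap ∘L (T - A))‖ < 1 := by
    rw [norm_neg]
    calc ‖Ap ∘L (T - A)‖ ≤ ‖Ap‖ * ‖T - A‖ := opNorm_comp_le _ _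
    _ < ‖Ap‖ * ‖Ap‖⁻¹ := by
        exact mul_lt_mul_of_pos_left hT hApnorm
    _ = 1 := mul_inv_cancel₀ (ne_of_gt hApnorm)
  set u : (E →L[ℝ] E)ˣ := Units.oneSub _ hnorm with hu_def
  have hu : (u : E →L[ℝ] E) = 1 + Ap ∘L (T - A) := by
    have h : (u : E →L[ℝ] E) = 1 - (-(Ap ∘L (T - A))) := rfl
    rw [h, sub_neg_eq_add]
  -- key: A ∘ u = A ∘ Ap ∘ T pointwise
  have hAU : ∀ x : E, A ((u : E →L[ℝ] E) x) = A (Ap (T x)) := by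
    intro x
    rw [hu]
    simp only [ContinuousLinearMap.add_apply, ContinuousLinearMap.one_apply,
      ContinuousLinearMap.comp_apply, ContinuousLinearMap.sub_apply]
    rw [map_sub, map_add, map_sub, h1' x]
    abel
  -- range T ⊔ ker Ap = ⊤
  have hsup : LinearMap.range (T : E →ₗ[ℝ] F) ⊔ LinearMap.ker (Ap : F →ₗ[ℝ] E) = ⊤ := by
    rw [eq_top_iff]
    intro f _
    set x : E := ((u⁻¹ : (E →L[ℝ] E)ˣ) : E →L[ℝ] E) (Ap f) with hx
    have hux : (u : E →L[ℝ] E) x = Ap f := by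
      have h : ((u : E →L[ℝ] E) * ((u⁻¹ : (E →L[ℝ] E)ˣ) : E →L[ℝ] E)) (Ap f) = Ap f := by
        rw [u.mul_inv]; rfl
      exact h
    have hATx : A (Ap (T x)) = A (Ap f) := by rw [← hAU, hux]
    have hApTx : Ap (T x) = Ap f := by
      have := congrArg Ap hATx
      rwa [h2' (T x), h2' f] at this
    have hker : f - T x ∈ LinearMap.ker (Ap : F →ₗ[ℝ] E) := by
      rw [LinearMap.mem_ker, map_sub, ContinuousLinearMap.coe_coe, hApTx, sub_self]
    exact Submodule.mem_sup.2 ⟨T x, ⟨x, rfl⟩, f - T x, hker, by abel⟩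
  -- ker Ap ≃ F ⧸ range A
  let φ : (LinearMap.ker (Ap : F →ₗ[ℝ] E)) →ₗ[ℝ] (F ⧸ LinearMap.range (A : E →ₗ[ℝ] F)) :=
    ((LinearMap.range (A : E →ₗ[ℝ] F)).mkQ).comp (LinearMap.ker (Ap : F →ₗ[ℝ] E)).subtype
  have hφinj : Function.Injective φ := by
    intro x y hxy
    have hmem : (x : F) - (y : F) ∈ LinearMap.range (A : E →ₗ[ℝ] F) := by
      rw [← Submodule.Quotient.eq]
      exact hxy
    obtain ⟨z, hz⟩ := hmem
    have hx0 : Ap ((x : F) - (y : F)) = 0 := by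
      rw [map_sub, show Ap (x : F) = 0 from x.2, show Ap (y : F) = 0 from y.2, sub_self]
    have hxy' : (x : F) - (y : F) = 0 := by
      have h := h1' z
      rw [← ContinuousLinearMap.coe_coe (f := A), hz, hx0, map_zero] at h
      exact h.symm
    exact Subtype.ext (sub_eq_zero.mp hxy')
  have hφsurj : Function.Surjective φ := by
    intro q
    obtain ⟨f, rfl⟩ := Submodule.mkQ_surjective _ q
    refine ⟨⟨f - A (Ap f), ?_⟩, ?_⟩
    · rw [LinearMap.mem_ker, map_sub, ContinuousLinearMap.coe_coe, h2' f, sub_self]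
    · show Submodule.Quotient.mk (f - A (Ap f)) = Submodule.Quotient.mk f
      rw [Submodule.Quotient.eq]
      exact ⟨-(Ap f), by rw [map_neg]; abel⟩
  let eφ : (LinearMap.ker (Ap : F →ₗ[ℝ] E)) ≃ₗ[ℝ] (F ⧸ LinearMap.range (A : E →ₗ[ℝ] F)) :=
    LinearEquiv.ofBijective φ ⟨hφinj, hφsurj⟩
  have hfd : FiniteDimensional ℝ (LinearMap.ker (Ap : F →ₗ[ℝ] E)) := Module.Finite.equiv eφ.symm
  have hrank : Module.finrank ℝ (LinearMap.ker (Ap : F →ₗ[ℝ] E)) =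
      Module.finrank ℝ (F ⧸ LinearMap.range (A : E →ₗ[ℝ] F)) := eφ.finrank_eq
  -- ψ : ker Ap → F ⧸ range T, surjective
  let ψ : (LinearMap.ker (Ap : F →ₗ[ℝ] E)) →ₗ[ℝ] (F ⧸ LinearMap.range (T : E →ₗ[ℝ] F)) :=
    ((LinearMap.range (T : E →ₗ[ℝ] F)).mkQ).comp (LinearMap.ker (Ap : F →ₗ[ℝ] E)).subtype
  have hψsurj : Function.Surjective ψ := by
    intro q
    obtain ⟨f, rfl⟩ := Submodule.mkQ_surjective _ q
    have hf : f ∈ LinearMap.range (T : E →ₗ[ℝ] F) ⊔ LinearMap.ker (Ap : F →ₗ[ℝ] E) := hsup ▸ Submodule.mem_top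
    obtain ⟨t, ht, n, hn, rfl⟩ := Submodule.mem_sup.1 hf
    refine ⟨⟨n, hn⟩, ?_⟩
    show Submodule.Quotient.mk n = Submodule.Quotient.mk (t + n)
    rw [Submodule.Quotient.eq]
    have h : n - (t + n) = -t := by abel
    rw [h]
    exact Submodule.neg_mem _ ht
  have hrank2 : Module.finrank ℝ (LinearMap.ker (Ap : F →ₗ[ℝ] E)) =
      Module.finrank ℝ (F ⧸ LinearMap.range (T : E →ₗ[ℝ] F)) := by
    rw [hrank, hcokerEq]
  have hψker : LinearMap.ker ψ = ⊥ := by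
    have h3 := LinearMap.finrank_range_add_finrank_ker ψ
    have hrtop : LinearMap.range ψ = ⊤ := LinearMap.range_eq_top.2 hψsurj
    rw [hrtop, finrank_top] at h3
    rw [← hrank2] at h3
    have : Module.finrank ℝ (LinearMap.ker ψ) = 0 := by omega
    exact Submodule.finrank_eq_zero.mp this
  -- conclude
  rw [eq_bot_iff]
  rintro x ⟨hxT, hxK⟩
  have : (⟨x, hxK⟩ : LinearMap.ker (Ap : F →ₗ[ℝ] E)) ∈ LinearMap.ker ψ := by
    show ((LinearMap.range (T : E →ₗ[ℝ] F)).mkQ) x = 0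
    rw [Submodule.mkQ_apply, Submodule.Quotient.mk_eq_zero]
    exact hxT
  rw [hψker, Submodule.mem_bot] at this
  have hx0 : x = 0 := congrArg Subtype.val this
  exact hx0 ▸ Submodule.zero_mem ⊥
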